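/- Let M > 0 be real, K > 0, and (a_n)_{n≥1} complex numbers with |a_n| ≤ K^n for all n ≥ 1. Fix c > log K, so that F(t) := Σ_{n≥1} a_n e^{-nt} converges absolutely and is bounded and holomorphic on {Re t ≥ c}. Set C := (4π/M)^{1/2} e^{iπ/4}. Then for every τ in the upper half-plane ℍ, Σ_{n≥1} a_n e^{iπ n² τ/M} = (i/(π^{1/2} C)) · τ^{-1/2} · ∫_{-∞}^{+∞} e^{-(c+is)²/(C² τ)} F(c+is) ds, where τ^{-1/2} is the branch with arg(τ^{1/2}) ∈ (0, π/2). (This is the parabolic-contour Laplace representation of the partial theta series, the parabola ∂P_c = {ξ : Re(C ξ^{1/2}) = c} being parametrized by ξ = ((c+is)/C)², s ∈ ℝ.) -/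

import Mathlib

open Complex Filter MeasureTheory

/-- Parabolic-contour Laplace representation of a partial theta series:
for `M > 0`, coefficients `aₙ` with `|aₙ| ≤ Kⁿ`, `c > log K` and `τ` in the upper half-plane,
`Σ_{n≥1} aₙ e^{iπn²τ/M} = (i/(√π C)) τ^{-1/2} ∫_ℝ e^{-(c+is)²/(C²τ)} F(c+is) ds`
where `C = (4π/M)^{1/2} e^{iπ/4}` and `F(t) = Σ_{n≥1} aₙ e^{-nt}`. -/
theorem statement0 (M K : ℝ) (hM : 0 < M) (hK : 0 < K)
    (a : ℕ → ℂ) (ha : ∀ n : ℕ, 1 ≤ n → ‖a n‖ ≤ K ^ n)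
    (c : ℝ) (hc : Real.log K < c)
    (C : ℂ) (hC : C = (Real.sqrt (4 * Real.pi / M) : ℂ) * Complex.exp (Complex.I * Real.pi / 4))
    (τ : ℂ) (hτ : 0 < τ.im) :
    ∑' n : ℕ, a (n + 1) * Complex.exp (Complex.I * Real.pi * ((n : ℂ) + 1) ^ 2 * τ / M)
      = Complex.I / ((Real.sqrt Real.pi : ℂ) * C) * τ ^ (-(1 / 2) : ℂ) *
        ∫ s : ℝ, Complex.exp (-(((c : ℂ) + (s : ℂ) * Complex.I) ^ 2) / (C ^ 2 * τ)) *
          ∑' n : ℕ, a (n + 1) * Complex.exp (-((n : ℂ) + 1) * ((c : ℂ) + (s : ℂ) * Complex.I)) := by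
  have hπ := Real.pi_pos
  have hM' : (0:ℝ) < 4 * Real.pi / M := by positivity
  have hτne : τ ≠ 0 := fun h => by simp [h] at hτ
  -- the square of C
  have hC2 : C ^ 2 = ((4 * Real.pi / M : ℝ) : ℂ) * Complex.I := by
    rw [hC, mul_pow, ← Complex.ofReal_pow, Real.sq_sqrt hM'.le, ← Complex.exp_nat_mul]
    rw [show (2:ℕ) * (Complex.I * (Real.pi:ℂ) / 4) = ((Real.pi/2 : ℝ):ℂ) * Complex.I by
      push_cast; ring]
    rw [Complex.exp_mul_I, ← Complex.ofReal_cos, ← Complex.ofReal_sin,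
      Real.cos_pi_div_two, Real.sin_pi_div_two]
    simp
  set b : ℂ := C ^ 2 * τ with hbdef
  have hb : b = ((4 * Real.pi / M : ℝ) : ℂ) * Complex.I * τ := by rw [hbdef, hC2]
  have hb0 : b ≠ 0 := by
    rw [hb]; exact mul_ne_zero (mul_ne_zero (ofReal_ne_zero.mpr hM'.ne') I_ne_zero) hτne
  have hbre : (1/b).re < 0 := by
    have hbre' : b.re < 0 := by
      rw [hb, mul_assoc]
      rw [show (((4 * Real.pi / M : ℝ) : ℂ) * (Complex.I * τ)).re
          = (4 * Real.pi / M) * (Complex.I * τ).re from by simp]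
      have : (Complex.I * τ).re = -τ.im := by simp
      rw [this]
      nlinarith
    rw [one_div, Complex.inv_re]
    exact div_neg_of_neg_of_pos hbre' (normSq_pos.mpr hb0)
  -- the pointwise quadratic form of the integrand
  have h1 : ∀ (n : ℕ) (s : ℝ), Complex.exp (-(((c : ℂ) + (s:ℂ) * Complex.I) ^ 2) / b) *
      Complex.exp (-((n:ℂ)+1) * ((c:ℂ) + (s:ℂ) * Complex.I))
      = Complex.exp ((1/b) * (s:ℂ)^2 + (-2*Complex.I*(c:ℂ)/b - ((n:ℂ)+1)*Complex.I) * (s:ℂ)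
        + (-(c:ℂ)^2/b - ((n:ℂ)+1)*(c:ℂ))) := by
    intro n s
    rw [← Complex.exp_add]
    congr 1
    field_simp
    linear_combination (-(s:ℂ)^2) * Complex.I_sq
  -- the key Gaussian integral evaluation
  have key : ∀ n : ℕ, ∫ s : ℝ, Complex.exp (-(((c : ℂ) + (s:ℂ) * Complex.I) ^ 2) / b) *
      Complex.exp (-((n:ℂ)+1) * ((c:ℂ) + (s:ℂ) * Complex.I))
      = (-(Real.pi:ℂ) * b) ^ (1/2 : ℂ) *
        Complex.exp (Complex.I * Real.pi * ((n : ℂ) + 1) ^ 2 * τ / M) := by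
    intro n
    simp_rw [h1 n]
    rw [integral_cexp_quadratic hbre]
    congr 1
    · congr 1
      field_simp
    · have h2 : (-(c:ℂ)^2/b - ((n:ℂ)+1)*(c:ℂ))
          - (-2*Complex.I*(c:ℂ)/b - ((n:ℂ)+1)*Complex.I)^2 / (4 * (1/b))
          = ((n:ℂ)+1)^2 * b / 4 := by
        field_simp
        linear_combination (-(2*(c:ℂ) + b*((n:ℂ)+1))^2) * Complex.I_sq
      rw [h2]
      congr 1
      have hMne : (M:ℂ) ≠ 0 := by exact_mod_cast hM.ne'
      rw [hb]
      push_cast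
      field_simp
  -- the family of integrands
  set F : ℕ → ℝ → ℂ := fun n s => Complex.exp (-(((c : ℂ) + (s:ℂ) * Complex.I) ^ 2) / b) *
      (a (n+1) * Complex.exp (-((n:ℂ)+1) * ((c:ℂ) + (s:ℂ) * Complex.I))) with hF
  have hInt : ∀ n : ℕ, Integrable (F n) := by
    intro n
    have h := (integrable_cexp_quadratic' hbre
      (-2*Complex.I*(c:ℂ)/b - ((n:ℂ)+1)*Complex.I)
      (-(c:ℂ)^2/b - ((n:ℂ)+1)*(c:ℂ))).const_mul (a (n+1))
    refine h.congr (Filter.Eventually.of_forall fun s => ?_)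
    simp only [hF]
    rw [← h1 n s]
    ring
  -- norm of the integrand
  have hnormpt : ∀ (n : ℕ) (s : ℝ), ‖F n s‖
      = (‖a (n+1)‖ * Real.exp (-((n:ℝ)+1)*c)) *
        ‖Complex.exp (-(((c : ℂ) + (s:ℂ) * Complex.I) ^ 2) / b)‖ := by
    intro n s
    have hre : (-((n:ℂ)+1) * ((c:ℂ) + (s:ℂ) * Complex.I)).re = -((n:ℝ)+1)*c := by
      simp [Complex.mul_re]
    simp only [hF, norm_mul, Complex.norm_exp, hre]
    ring
  set G := ∫ s : ℝ, ‖Complex.exp (-(((c : ℂ) + (s:ℂ) * Complex.I) ^ 2) / b)‖ with hGdef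
  have hG0 : 0 ≤ G := integral_nonneg fun s => norm_nonneg _
  have hnorm : ∀ n : ℕ, (∫ s : ℝ, ‖F n s‖)
      = (‖a (n+1)‖ * Real.exp (-((n:ℝ)+1)*c)) * G := by
    intro n
    simp_rw [hnormpt n]
    rw [integral_const_mul]
  -- summability of the integrals of norms
  set r : ℝ := K * Real.exp (-c) with hrdef
  have hr0 : 0 ≤ r := by positivity
  have hr1 : r < 1 := by
    have h : K < Real.exp c := (Real.log_lt_iff_lt_exp hK).mp hc
    rw [hrdef, Real.exp_neg]
    calc K * (Real.exp c)⁻¹ < Real.exp c * (Real.exp c)⁻¹ :=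
          mul_lt_mul_of_pos_right h (inv_pos.mpr (Real.exp_pos c))
      _ = 1 := mul_inv_cancel₀ (Real.exp_pos c).ne'
  have hSum : Summable (fun n : ℕ => ∫ s : ℝ, ‖F n s‖) := by
    have hgeo : Summable (fun n : ℕ => r^(n+1) * G) := by
      refine ((summable_geometric_of_lt_one hr0 hr1).mul_right (r * G)).congr fun n => ?_
      rw [pow_succ]; ring
    refine Summable.of_nonneg_of_le (fun n => integral_nonneg fun s => norm_nonneg _)
      (fun n => ?_) hgeo
    rw [hnorm n]
    have hstep : ‖a (n+1)‖ * Real.exp (-((n:ℝ)+1)*c) ≤ r^(n+1) := by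
      have ha' := ha (n+1) (by omega)
      have hrpow : r^(n+1) = K^(n+1) * Real.exp (-((n:ℝ)+1)*c) := by
        rw [hrdef, mul_pow, ← Real.exp_nat_mul]
        congr 2
        push_cast
        ring
      rw [hrpow]
      exact mul_le_mul_of_nonneg_right (by exact_mod_cast ha') (Real.exp_pos _).le
    exact mul_le_mul_of_nonneg_right hstep hG0
  -- swap the integral and the sum
  have hswap : (∫ s : ℝ, Complex.exp (-(((c : ℂ) + (s : ℂ) * Complex.I) ^ 2) / b) *
        ∑' n : ℕ, a (n + 1) * Complex.exp (-((n : ℂ) + 1) * ((c : ℂ) + (s : ℂ) * Complex.I)))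
      = ∑' n : ℕ, ∫ s : ℝ, F n s := by
    rw [integral_tsum_of_summable_integral_norm hInt hSum]
    congr 1
    funext s
    exact tsum_mul_left.symm
  rw [hswap]
  -- evaluate each integral
  have hval : ∀ n : ℕ, (∫ s : ℝ, F n s)
      = a (n+1) * ((-(Real.pi:ℂ) * b) ^ (1/2 : ℂ) *
        Complex.exp (Complex.I * Real.pi * ((n : ℂ) + 1) ^ 2 * τ / M)) := by
    intro n
    calc (∫ s : ℝ, F n s)
        = ∫ s : ℝ, a (n+1) * (Complex.exp (-(((c : ℂ) + (s:ℂ) * Complex.I) ^ 2) / b) *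
            Complex.exp (-((n:ℂ)+1) * ((c:ℂ) + (s:ℂ) * Complex.I))) := by
          congr 1; funext s; simp only [hF]; ring
      _ = a (n+1) * ∫ s : ℝ, Complex.exp (-(((c : ℂ) + (s:ℂ) * Complex.I) ^ 2) / b) *
            Complex.exp (-((n:ℂ)+1) * ((c:ℂ) + (s:ℂ) * Complex.I)) := integral_const_mul _ _
      _ = _ := by rw [key n]
  have hsum2 : (∑' n : ℕ, ∫ s : ℝ, F n s)
      = (-(Real.pi:ℂ) * b) ^ (1/2 : ℂ) *
        ∑' n : ℕ, a (n + 1) * Complex.exp (Complex.I * Real.pi * ((n : ℂ) + 1) ^ 2 * τ / M) := by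
    rw [← tsum_mul_left]
    exact tsum_congr fun n => by rw [hval n]; ring
  rw [hsum2]
  -- the constant identity
  have hconst : Complex.I / ((Real.sqrt Real.pi : ℂ) * C) * τ ^ (-(1 / 2) : ℂ) *
      (-(Real.pi:ℂ) * b) ^ (1/2 : ℂ) = 1 := by
    have hr : (0:ℝ) < 4 * Real.pi^2 / M := by positivity
    have hz : -Complex.I * τ ≠ 0 := mul_ne_zero (by simp) hτne
    have h1' : -(Real.pi:ℂ) * b = ((4 * Real.pi^2 / M : ℝ) : ℂ) * (-Complex.I * τ) := by
      rw [hb]; push_cast; ring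
    have h2 : (((4 * Real.pi^2 / M : ℝ) : ℂ) * (-Complex.I * τ)) ^ (1/2 : ℂ)
        = ((Real.sqrt (4 * Real.pi^2 / M) : ℝ) : ℂ) * (-Complex.I * τ) ^ (1/2 : ℂ) := by
      rw [Complex.cpow_def_of_ne_zero (mul_ne_zero (ofReal_ne_zero.mpr hr.ne') hz),
        Complex.log_ofReal_mul hr hz, add_mul, Complex.exp_add,
        ← Complex.cpow_def_of_ne_zero hz]
      congr 1
      rw [show ((Real.log (4 * Real.pi^2 / M) : ℂ)) * (1/2 : ℂ)
          = ((Real.log (4 * Real.pi^2 / M) / 2 : ℝ) : ℂ) by push_cast; ring,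
        ← Complex.ofReal_exp]
      congr 1
      rw [Real.sqrt_eq_rpow, Real.rpow_def_of_pos hr]
      ring_nf
    have harg : Complex.arg (-Complex.I) + Complex.arg τ ∈ Set.Ioc (-Real.pi) Real.pi := by
      rw [Complex.arg_neg_I]
      have h3 := Complex.arg_le_pi τ
      have h4 : 0 ≤ Complex.arg τ := Complex.arg_nonneg_iff.mpr hτ.le
      constructor <;> [linarith; linarith]
    have h5 : (-Complex.I * τ) ^ (1/2 : ℂ)
        = Complex.exp (-(Real.pi:ℂ)/4 * Complex.I) * τ ^ (1/2 : ℂ) := by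
      rw [Complex.cpow_def_of_ne_zero hz, Complex.log_mul (by simp) hτne harg,
        Complex.log_neg_I, add_mul, Complex.exp_add, ← Complex.cpow_def_of_ne_zero hτne]
      congr 2
      ring
    have h6 : τ ^ (-(1/2) : ℂ) * τ ^ (1/2 : ℂ) = 1 := by
      rw [← Complex.cpow_add _ _ hτne]; norm_num
    rw [h1', h2, h5]
    have h7 : (Real.sqrt (4 * Real.pi^2 / M) : ℝ)
        = Real.sqrt (4 * Real.pi / M) * Real.sqrt Real.pi := by
      rw [← Real.sqrt_mul hM'.le]
      congr 1
      field_simp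
    have hsne : ((Real.sqrt Real.pi : ℝ) : ℂ) ≠ 0 :=
      ofReal_ne_zero.mpr (Real.sqrt_pos.mpr hπ).ne'
    have hsne2 : ((Real.sqrt (4 * Real.pi / M) : ℝ) : ℂ) ≠ 0 :=
      ofReal_ne_zero.mpr (Real.sqrt_pos.mpr hM').ne'
    calc Complex.I / ((Real.sqrt Real.pi : ℂ) * C) * τ ^ (-(1/2) : ℂ) *
          (((Real.sqrt (4 * Real.pi^2 / M) : ℝ) : ℂ) *
            (Complex.exp (-(Real.pi:ℂ)/4 * Complex.I) * τ ^ (1/2 : ℂ)))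
        = (Complex.I / ((Real.sqrt Real.pi : ℂ) * C) * ((Real.sqrt (4 * Real.pi^2 / M) : ℝ) : ℂ) *
            Complex.exp (-(Real.pi:ℂ)/4 * Complex.I)) * (τ ^ (-(1/2) : ℂ) * τ ^ (1/2 : ℂ)) := by
          ring
      _ = 1 := by
          rw [h6, mul_one, hC, h7]
          push_cast
          rw [div_mul_eq_mul_div, div_mul_eq_mul_div, div_eq_one_iff_eq
            (mul_ne_zero hsne (mul_ne_zero hsne2 (Complex.exp_ne_zero _)))]
          calc Complex.I * (((Real.sqrt (4*Real.pi/M) : ℝ):ℂ) * ((Real.sqrt Real.pi : ℝ):ℂ)) *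
                Complex.exp (-(Real.pi:ℂ)/4 * Complex.I)
              = (((Real.sqrt Real.pi : ℝ):ℂ) * ((Real.sqrt (4*Real.pi/M) : ℝ):ℂ)) *
                (Complex.I * Complex.exp (-(Real.pi:ℂ)/4 * Complex.I)) := by ring
            _ = ((Real.sqrt Real.pi : ℝ):ℂ) * (((Real.sqrt (4*Real.pi/M) : ℝ):ℂ) *
                Complex.exp (Complex.I * (Real.pi:ℂ) / 4)) := by
                rw [mul_assoc]
                congr 1
                congr 1
                have hhalf : Complex.exp (Complex.I * (Real.pi:ℂ)/4) *
                    Complex.exp ((Real.pi:ℂ)/4 * Complex.I) = Complex.I := by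
                  rw [← Complex.exp_add,
                    show Complex.I * (Real.pi:ℂ)/4 + (Real.pi:ℂ)/4 * Complex.I
                      = ((Real.pi/2 : ℝ):ℂ) * Complex.I by push_cast; ring]
                  rw [Complex.exp_mul_I, ← Complex.ofReal_cos, ← Complex.ofReal_sin,
                    Real.cos_pi_div_two, Real.sin_pi_div_two]
                  simp
                refine mul_right_cancel₀ (Complex.exp_ne_zero ((Real.pi:ℂ)/4 * Complex.I)) ?_
                rw [hhalf, mul_assoc, ← Complex.exp_add,
                  show -(Real.pi:ℂ)/4 * Complex.I + (Real.pi:ℂ)/4 * Complex.I = 0 by ring,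
                  Complex.exp_zero, mul_one]
  rw [← mul_assoc, hconst, one_mul]
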